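/- The number of lattice paths from (0,0) to (n,0) using steps (1,1), (1,-1), (1,0), never going below the x-axis, and with all (1,0) steps lying on the x-axis, equals binomial(n, floor(n/2)). -/

import Mathlib

namespace GM

/-- minimum of all prefix sums (at most 0). -/
def G : List ℤ → ℤ
  | [] => 0
  | x :: t => min 0 (x + G t)

def phi (l : List ℤ) : List ℤ := l.map (fun x => if x = 0 then 1 else x)

def psi : List ℤ → List ℤ
  | [] => []
  | x :: t => (if x = 1 ∧ G t = 0 then 0 else x) :: psi t

lemma G_nonpos (p : List ℤ) : G p ≤ 0 := by
  cases p with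
  | nil => exact le_refl _
  | cons x t => exact min_le_left _ _

lemma G_le_take (p : List ℤ) (m : ℕ) : G p ≤ (p.take m).sum := by
  induction p generalizing m with
  | nil => simp [G]
  | cons x t ih =>
    cases m with
    | zero => simpa using G_nonpos (x :: t)
    | succ m =>
      simp only [List.take_succ_cons, List.sum_cons, G]
      have := ih m
      have : x + G t ≤ x + (t.take m).sum := by linarith
      exact le_trans (min_le_right _ _) this

lemma G_exists (p : List ℤ) : ∃ m, G p = (p.take m).sum := by
  induction p with
  | nil => exact ⟨0, rfl⟩
  | cons x t ih =>
    obtain ⟨m, hm⟩ := ih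
    by_cases h : 0 ≤ x + G t
    · exact ⟨0, by simp [G, min_eq_left h]⟩
    · refine ⟨m + 1, ?_⟩
      push_neg at h
      rw [hm] at h
      simp [G, hm, min_eq_right h.le]

lemma G_eq_zero_iff (p : List ℤ) : G p = 0 ↔ ∀ m, 0 ≤ (p.take m).sum := by
  constructor
  · intro h m; rw [← h]; exact G_le_take p m
  · intro h
    obtain ⟨m, hm⟩ := G_exists p
    exact le_antisymm (G_nonpos p) (hm ▸ h m)

lemma psi_length (p : List ℤ) : (psi p).length = p.length := by
  induction p with
  | nil => rfl
  | cons x t ih => simp [psi, ih]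

lemma psi_get (p : List ℤ) (i : ℕ) (h : i < (psi p).length) (h' : i < p.length) :
    (psi p).get ⟨i, h⟩ =
      if p.get ⟨i, h'⟩ = 1 ∧ G (p.drop (i + 1)) = 0 then 0 else p.get ⟨i, h'⟩ := by
  induction p generalizing i with
  | nil => simp at h'
  | cons x t ih =>
    cases i with
    | zero => simp [psi]
    | succ i =>
      have h2 : i < (psi t).length := by
        simpa [psi] using h
      simpa [psi] using ih i h2 (by simpa using h')

lemma psi_mem (p : List ℤ) (hp : ∀ x ∈ p, x = 1 ∨ x = -1) :
    ∀ x ∈ psi p, x = 1 ∨ x = -1 ∨ x = 0 := by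
  induction p with
  | nil => simp [psi]
  | cons y t ih =>
    intro x hx
    simp only [psi, List.mem_cons] at hx
    rcases hx with hx | hx
    · subst hx
      by_cases h : y = 1 ∧ G t = 0
      · simp [h]
      · simp only [if_neg h]
        rcases hp y (by simp) with h1 | h1 <;> simp [h1]
    · exact ih (fun z hz => hp z (by simp [hz])) x hx

/-- key formula for prefix sums of `psi p`. -/
lemma psi_take_sum (p : List ℤ) (hp : ∀ x ∈ p, x = 1 ∨ x = -1) (m : ℕ) :
    ((psi p).take m).sum = G p - G (p.drop m) := by
  induction p generalizing m with
  | nil => simp [psi, G]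
  | cons x t ih =>
    cases m with
    | zero => simp
    | succ m =>
      have hx := hp x (by simp)
      have ht : ∀ y ∈ t, y = 1 ∨ y = -1 := fun z hz => hp z (by simp [hz])
      have hGt := G_nonpos t
      simp only [psi, List.take_succ_cons, List.sum_cons, List.drop_succ_cons, ih ht m]
      have hhead : (if x = 1 ∧ G t = 0 then (0:ℤ) else x) = G (x :: t) - G t := by
        rcases hx with h1 | h1
        · by_cases h : G t = 0
          · simp [h1, h, G]
          · have hlt : G t ≤ -1 := by
              have := G_nonpos t; omega
            have : x + G t ≤ 0 := by omega
            simp only [h1, G]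
            rw [if_neg (by tauto), min_eq_right (by omega)]
            ring
        · have : x + G t ≤ 0 := by omega
          simp only [G, h1]
          rw [if_neg (by norm_num), min_eq_right (by omega)]
          ring
      rw [hhead]; ring

lemma phi_psi (p : List ℤ) (hp : ∀ x ∈ p, x = 1 ∨ x = -1) : phi (psi p) = p := by
  induction p with
  | nil => rfl
  | cons x t ih =>
    have hx := hp x (by simp)
    have ht : ∀ y ∈ t, y = 1 ∨ y = -1 := fun z hz => hp z (by simp [hz])
    simp only [psi, phi, List.map_cons]
    rw [show (List.map (fun x => if x = 0 then 1 else x) (psi t)) = phi (psi t) from rfl, ih ht]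
    by_cases h : x = 1 ∧ G t = 0
    · simp [h.1]
    · have : x ≠ 0 := by rcases hx with h1 | h1 <;> simp [h1]
      simp [h, this]

lemma phi_length (l : List ℤ) : (phi l).length = l.length := by simp [phi]

lemma phi_mem (l : List ℤ) (hl : ∀ x ∈ l, x = 1 ∨ x = -1 ∨ x = 0) :
    ∀ x ∈ phi l, x = 1 ∨ x = -1 := by
  intro x hx
  simp only [phi, List.mem_map] at hx
  obtain ⟨y, hy, rfl⟩ := hx
  rcases hl y hy with h | h | h <;> simp [h]

lemma le_phi_take_sum (l : List ℤ) (m : ℕ) (hl : ∀ x ∈ l, x = 1 ∨ x = -1 ∨ x = 0) :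
    (l.take m).sum ≤ ((phi l).take m).sum := by
  induction l generalizing m with
  | nil => simp [phi]
  | cons x t ih =>
    cases m with
    | zero => simp
    | succ m =>
      have hx := hl x (by simp)
      have ht : ∀ y ∈ t, y = 1 ∨ y = -1 ∨ y = 0 := fun z hz => hl z (by simp [hz])
      simp only [phi, List.map_cons, List.take_succ_cons, List.sum_cons]
      have h1 : x ≤ if x = 0 then 1 else x := by
        rcases hx with h | h | h <;> simp [h]
      have := ih m ht
      simp only [phi] at this
      linarith



lemma psi_getElem (p : List ℤ) (i : ℕ) (h : i < (psi p).length) (h' : i < p.length) :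
    (psi p)[i] = if p[i] = 1 ∧ G (p.drop (i + 1)) = 0 then 0 else p[i] := by
  induction p generalizing i with
  | nil => simp at h'
  | cons x t ih =>
    cases i with
    | zero => simp [psi]
    | succ i =>
      have h2 : i < (psi t).length := by simpa [psi] using h
      simpa [psi] using ih i h2 (by simpa using h')

lemma phi_id (s : List ℤ) (hs : ∀ x ∈ s, x ≠ 0) : phi s = s := by
  induction s with
  | nil => rfl
  | cons x t ih =>
    simp only [phi, List.map_cons, if_neg (hs x (by simp))]
    rw [show List.map (fun x => if x = 0 then 1 else x) t = phi t from rfl,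
      ih (fun z hz => hs z (by simp [hz]))]

lemma psi_phi (l : List ℤ)
    (hmem : ∀ x ∈ l, x = 1 ∨ x = -1 ∨ x = 0)
    (hpre : ∀ m, 0 ≤ (l.take m).sum)
    (hsum : l.sum = 0)
    (hflat : ∀ (m : ℕ) (hm : m < l.length), l[m] = 0 → (l.take m).sum = 0) :
    psi (phi l) = l := by
  apply List.ext_getElem
  · rw [psi_length, phi_length]
  intro i h1 h2
  have hip : i < (phi l).length := by rwa [phi_length]
  rw [psi_getElem (phi l) i h1 hip]
  have hget : (phi l)[i] = if l[i] = 0 then 1 else l[i] := by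
    simp [phi]
  have hdrop : (phi l).drop (i + 1) = phi (l.drop (i + 1)) := List.map_drop.symm
  have hsegsum : ∀ m, ((l.drop (i+1)).take m).sum
      = (l.take (i+1+m)).sum - (l.take (i+1)).sum := by
    intro m
    have h3 : (l.take (i+1+m)).sum = (l.take (i+1)).sum + ((l.drop (i+1)).take m).sum := by
      rw [List.take_add, List.sum_append]
    omega
  rcases hmem l[i] (l.getElem_mem h2) with hv | hv | hv
  · -- up step: show G (phi (l.drop (i+1))) ≠ 0
    have hsucc : (l.take (i+1)).sum = (l.take i).sum + 1 := by
      have := List.sum_take_succ l i h2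
      omega
    have hex : ∃ j, i < j ∧ (l.take j).sum ≤ (l.take i).sum := by
      refine ⟨l.length, h2, ?_⟩
      rw [List.take_length, hsum]
      exact hpre i
    classical
    obtain ⟨j, ⟨hij, hjle⟩, hjmin⟩ :
        ∃ j, (i < j ∧ (l.take j).sum ≤ (l.take i).sum) ∧
          ∀ k < j, ¬(i < k ∧ (l.take k).sum ≤ (l.take i).sum) :=
      ⟨Nat.find hex, Nat.find_spec hex, fun k hk => Nat.find_min hex hk⟩
    have hmin : ∀ k, i < k → k < j → (l.take i).sum < (l.take k).sum := by
      intro k hk1 hk2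
      have := hjmin k hk2
      push_neg at this
      exact this hk1
    have hjlen : j ≤ l.length := by
      by_contra hc
      push_neg at hc
      have := hmin l.length h2 hc
      rw [List.take_length, hsum] at this
      exact absurd (hpre i) (by omega)
    have hj1 : j - 1 < l.length := by omega
    have hstep : (l.take (j-1+1)).sum = (l.take (j-1)).sum + l[j-1] :=
      List.sum_take_succ l (j-1) hj1
    have hjj : j - 1 + 1 = j := by omega
    rw [hjj] at hstep
    have hgeneg : (-1 : ℤ) ≤ l[j-1] := by
      rcases hmem l[j-1] (l.getElem_mem hj1) with h | h | h <;> omega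
    have hσj : (l.take j).sum = (l.take i).sum := by
      rcases Nat.lt_or_ge i (j-1) with hlt | hge
      · have := hmin (j-1) hlt (by omega)
        omega
      · have hji : j - 1 = i := by omega
        have e1 : (l.take (j-1)).sum = (l.take i).sum := by rw [hji]
        have e2 : l[j-1] = l[i] := by congr 1
        omega
    have hsegval : ((l.drop (i+1)).take (j - (i+1))).sum = -1 := by
      rw [hsegsum (j - (i+1))]
      have hjj2 : i + 1 + (j - (i+1)) = j := by omega
      rw [hjj2]
      omega
    have hnozero : ∀ x ∈ (l.drop (i+1)).take (j - (i+1)), x ≠ 0 := by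
      intro x hx
      obtain ⟨m, hm, hxe⟩ := List.mem_iff_getElem.mp hx
      have hlt : (List.take (j - (i+1)) (List.drop (i+1) l)).length ≤ j - (i+1) := by
        simp [List.length_take]
      have hm1 : m < j - (i+1) := by omega
      have hm2 : i + 1 + m < l.length := by omega
      have hxval : x = l[i+1+m] := by
        rw [← hxe, List.getElem_take, List.getElem_drop]
      intro hx0
      have hflatk := hflat (i+1+m) hm2 (by omega)
      have := hmin (i+1+m) (by omega) (by omega)
      have hpi := hpre i
      omega
    have hGneg : G (phi (l.drop (i+1))) ≤ -1 := by
      have h4 : ((phi (l.drop (i+1))).take (j - (i+1))).sum = -1 := by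
        have : (phi (l.drop (i+1))).take (j - (i+1))
            = phi ((l.drop (i+1)).take (j - (i+1))) := by
          simp only [phi]
          exact List.map_take.symm
        rw [this, phi_id _ hnozero, hsegval]
      calc G (phi (l.drop (i+1))) ≤ _ := G_le_take _ (j - (i+1))
        _ = -1 := h4
    rw [hdrop, if_neg (by intro hc; omega), hget, if_neg (by omega)]
  · -- down step
    rw [hget, if_neg (by omega), if_neg (by intro hc; omega)]
  · -- level step
    have hflati := hflat i h2 hv
    have hGzero : G (phi (l.drop (i+1))) = 0 := by
      rw [G_eq_zero_iff]
      intro m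
      have h5 : 0 ≤ ((l.drop (i+1)).take m).sum := by
        rw [hsegsum m]
        have hsucc := List.sum_take_succ l i h2
        have := hpre (i+1+m)
        omega
      calc (0:ℤ) ≤ ((l.drop (i+1)).take m).sum := h5
        _ ≤ ((phi (l.drop (i+1))).take m).sum :=
            le_phi_take_sum _ m (fun z hz => hmem z (List.drop_subset _ _ hz))
    rw [hdrop, if_pos ⟨by rw [hget, if_pos hv], hGzero⟩]
    exact hv.symm



def P (n : ℕ) (l : List ℤ) : Prop :=
  l.length = n ∧ (∀ x ∈ l, x = 1 ∨ x = -1 ∨ x = 0) ∧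
    (∀ m, 0 ≤ (l.take m).sum) ∧ l.sum = 0 ∧
    (∀ (m : ℕ) (hm : m < l.length), l.get ⟨m, hm⟩ = 0 → (l.take m).sum = 0)

def Q (n : ℕ) (l : List ℤ) : Prop :=
  l.length = n ∧ (∀ x ∈ l, x = 1 ∨ x = -1) ∧ (∀ m, 0 ≤ (l.take m).sum)

lemma psi_P (n : ℕ) (p : List ℤ) (hq : Q n p) : P n (psi p) := by
  obtain ⟨hlen, hmem, hpre⟩ := hq
  have hG : G p = 0 := (G_eq_zero_iff p).mpr hpre
  refine ⟨by rw [psi_length, hlen], psi_mem p hmem, ?_, ?_, ?_⟩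
  · intro m
    rw [psi_take_sum p hmem m, hG]
    have := G_nonpos (p.drop m)
    omega
  · have h1 : (psi p).sum = ((psi p).take p.length).sum := by
      rw [← psi_length p, List.take_length]
    rw [h1, psi_take_sum p hmem p.length, hG, List.drop_length]
    simp [G]
  · intro m hm h0
    have h' : m < p.length := by rw [← psi_length p]; exact hm
    rw [List.get_eq_getElem] at h0
    rw [psi_getElem p m hm h'] at h0
    rcases hmem p[m] (p.getElem_mem h') with hv | hv
    · have hcond : G (p.drop (m+1)) = 0 := by
        by_contra hc
        rw [if_neg (by tauto)] at h0
        omega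
      rw [psi_take_sum p hmem m, hG]
      have hdm : p.drop m = p[m] :: p.drop (m+1) := List.drop_eq_getElem_cons h'
      rw [hdm]
      simp [G, hv, hcond]
    · rw [if_neg (by intro hc; omega)] at h0
      omega

lemma phi_Q (n : ℕ) (l : List ℤ) (hp : P n l) : Q n (phi l) := by
  obtain ⟨hlen, hmem, hpre, _, _⟩ := hp
  refine ⟨by rw [phi_length, hlen], phi_mem l hmem, fun m => ?_⟩
  exact le_trans (hpre m) (le_phi_take_sum l m hmem)

def PQequiv (n : ℕ) : {l : List ℤ // P n l} ≃ {l : List ℤ // Q n l} where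
  toFun l := ⟨phi l.1, phi_Q n l.1 l.2⟩
  invFun p := ⟨psi p.1, psi_P n p.1 p.2⟩
  left_inv l := by
    obtain ⟨l, hlen, hmem, hpre, hsum, hflat⟩ := l
    simp only [Subtype.mk_eq_mk]
    apply Subtype.ext
    exact psi_phi l hmem hpre hsum (fun m hm h => hflat m hm (by rwa [List.get_eq_getElem]))
  right_inv p := by
    obtain ⟨p, hlen, hmem, hpre⟩ := p
    simp only [Subtype.mk_eq_mk]
    apply Subtype.ext
    exact phi_psi p hmem



def S : ℕ → Finset (List ℤ)
  | 0 => {([] : List ℤ)}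
  | n+1 => ((S n).image (fun l => l ++ [1])) ∪
      (((S n).filter fun l => 0 < l.sum).image (fun l => l ++ [-1]))

lemma mem_S (n : ℕ) (l : List ℤ) : l ∈ S n ↔ Q n l := by
  induction n generalizing l with
  | zero =>
    simp only [S, Finset.mem_singleton, Q]
    constructor
    · rintro rfl
      exact ⟨rfl, by simp, by simp⟩
    · rintro ⟨hlen, -, -⟩
      exact List.length_eq_zero_iff.mp hlen
  | succ n ih =>
    constructor
    · intro hl
      simp only [S, Finset.mem_union, Finset.mem_image, Finset.mem_filter] at hl
      have key : ∀ (l' : List ℤ) (x : ℤ), Q n l' → (x = 1 ∨ (x = -1 ∧ 0 < l'.sum)) →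
          Q (n+1) (l' ++ [x]) := by
        rintro l' x ⟨hlen, hmem, hpre⟩ hx
        refine ⟨by simp [hlen], ?_, ?_⟩
        · intro y hy
          rcases List.mem_append.mp hy with h | h
          · exact hmem y h
          · simp only [List.mem_singleton] at h
            subst h
            rcases hx with h | h
            · left; exact h
            · right; exact h.1
        · intro m
          rcases le_or_gt m n with hm | hm
          · rw [List.take_append_of_le_length (by omega : m ≤ l'.length)]
            exact hpre m
          · rw [List.take_of_length_le (by simp [hlen]; omega)]
            rw [List.sum_append]
            have h0 : 0 ≤ l'.sum := by
              have := hpre l'.length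
              rwa [List.take_length] at this
            rcases hx with h | h <;> simp [h] <;> omega
      rcases hl with ⟨l', hl', rfl⟩ | ⟨l', ⟨hl', hs⟩, rfl⟩
      · exact key l' 1 (ih l' |>.mp hl') (Or.inl rfl)
      · exact key l' (-1) (ih l' |>.mp hl') (Or.inr ⟨rfl, hs⟩)
    · rintro ⟨hlen, hmem, hpre⟩
      have hne : l ≠ [] := by intro h; subst h; simp at hlen
      set x := l.getLast hne with hxdef
      have hx : l.dropLast ++ [x] = l := List.dropLast_append_getLast hne
      have hlen' : l.dropLast.length = n := by
        rw [List.length_dropLast, hlen]; omega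
      have hq : Q n l.dropLast := by
        refine ⟨hlen', fun y hy => hmem y (List.dropLast_subset l hy), fun m => ?_⟩
        rcases le_or_gt m n with hm | hm
        · have : l.dropLast.take m = l.take m := by
            conv_rhs => rw [← hx]
            rw [List.take_append_of_le_length (by omega)]
          rw [this]; exact hpre m
        · rw [List.take_of_length_le (by omega)]
          have : l.dropLast.sum = (l.take n).sum := by
            conv_rhs => rw [← hx]
            rw [List.take_append_of_le_length (by omega), List.take_of_length_le (by omega)]
          rw [this]; exact hpre n
      have hsuml : 0 ≤ l.sum := by
        have := hpre (n+1)
        rwa [List.take_of_length_le (by omega)] at this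
      have hsums : l.sum = l.dropLast.sum + x := by
        conv_lhs => rw [← hx]
        simp [List.sum_append]
      simp only [S, Finset.mem_union, Finset.mem_image, Finset.mem_filter]
      rcases hmem x (by rw [← hx]; exact List.mem_append_right _ (by simp)) with h1 | h1
      · left
        exact ⟨l.dropLast, (ih _).mpr hq, h1 ▸ hx⟩
      · right
        exact ⟨l.dropLast, ⟨(ih _).mpr hq, by omega⟩, h1 ▸ hx⟩

def cnt (n : ℕ) (k : ℤ) : ℕ := ((S n).filter fun l => l.sum = k).card

lemma cnt_zero (k : ℤ) : cnt 0 k = if k = 0 then 1 else 0 := by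
  by_cases h : k = 0 <;> simp [cnt, S, Finset.filter_singleton, h, eq_comm]

lemma cnt_neg (n : ℕ) (k : ℤ) (hk : k < 0) : cnt n k = 0 := by
  rw [cnt, Finset.card_eq_zero, Finset.filter_eq_empty_iff]
  intro l hl
  obtain ⟨hlen, hmem, hpre⟩ := (mem_S n l).mp hl
  have := hpre l.length
  rw [List.take_length] at this
  omega

lemma cnt_succ (n : ℕ) (k : ℤ) (hk : 0 ≤ k) :
    cnt (n+1) k = cnt n (k-1) + cnt n (k+1) := by
  classical
  have hdisj : Disjoint ((S n).image (fun l => l ++ [1]))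
      (((S n).filter fun l => 0 < l.sum).image (fun l => l ++ [-1])) := by
    rw [Finset.disjoint_left]
    rintro a ha hb
    obtain ⟨l1, -, rfl⟩ := Finset.mem_image.mp ha
    obtain ⟨l2, -, he⟩ := Finset.mem_image.mp hb
    have h1 : (l2 ++ [(-1:ℤ)]).getLast? = some (-1) := List.getLast?_concat
    rw [he, List.getLast?_concat] at h1
    simp at h1
  rw [cnt, S, Finset.filter_union,
    Finset.card_union_of_disjoint (Finset.disjoint_filter_filter hdisj),
    Finset.filter_image, Finset.filter_image, Finset.filter_filter,
    Finset.card_image_of_injective _ (List.append_left_injective [1]),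
    Finset.card_image_of_injective _ (List.append_left_injective [-1])]
  congr 1
  · rw [cnt]
    apply congrArg
    apply Finset.filter_congr
    intro l _
    rw [List.sum_append]
    simp only [List.sum_cons, List.sum_nil]
    omega
  · rw [cnt]
    apply congrArg
    apply Finset.filter_congr
    intro l _
    rw [List.sum_append]
    simp only [List.sum_cons, List.sum_nil]
    constructor
    · rintro ⟨h1, h2⟩; omega
    · intro h; omega

def B (n k : ℕ) : ℤ :=
  if (n + k) % 2 = 0 then (n.choose ((n+k)/2) : ℤ) - (n.choose ((n+k)/2 + 1) : ℤ) else 0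

lemma cnt_formula (n : ℕ) : ∀ k : ℕ, (cnt n (k : ℤ) : ℤ) = B n k := by
  induction n with
  | zero =>
    intro k
    rw [cnt_zero]
    rcases k with _ | k
    · norm_num [B]
    · rw [B]
      have h1 : ((k:ℤ) + 1) ≠ 0 := by omega
      rw [if_neg (by push_cast; omega)]
      by_cases h : (0 + (k+1)) % 2 = 0
      · rw [if_pos h]
        have h2 : 0 < (0 + (k+1))/2 := by omega
        rw [Nat.choose_eq_zero_of_lt (by omega), Nat.choose_eq_zero_of_lt (by omega)]
        simp
      · rw [if_neg h]; simp
  | succ n ih =>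
    intro k
    rcases k with _ | k
    · -- k = 0
      have h1 : cnt (n+1) 0 = cnt n 1 := by
        rw [cnt_succ n 0 le_rfl, cnt_neg n (0-1) (by omega)]
        norm_num
      rw [show ((0:ℕ):ℤ) = 0 from rfl, h1, show (1:ℤ) = ((1:ℕ):ℤ) from rfl, ih 1]
      -- B n 1 = B (n+1) 0
      rw [B, B]
      by_cases h : (n + 1) % 2 = 0
      · rw [if_pos (by omega), if_pos (by omega)]
        obtain ⟨m, rfl⟩ : ∃ m, n = 2*m + 1 := ⟨n/2, by omega⟩
        have e1 : (2*m+1+1)/2 = m + 1 := by omega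
        have e2 : (2*m+1+1+0)/2 = m + 1 := by omega
        rw [e1]
        have p1 : (2*m+1+1).choose (m+1) = (2*m+1).choose m + (2*m+1).choose (m+1) :=
          Nat.choose_succ_succ (2*m+1) m
        have p2 : (2*m+1+1).choose (m+1+1) = (2*m+1).choose (m+1) + (2*m+1).choose (m+2) :=
          Nat.choose_succ_succ (2*m+1) (m+1)
        have hs : (2*m+1).choose (m+1) = (2*m+1).choose m := Nat.choose_symm_half m
        push_cast [p1, p2, hs]
        ring
      · rw [if_neg (by omega), if_neg (by omega)]
    · -- k+1
      have h1 : cnt (n+1) ((k:ℤ)+1) = cnt n (k:ℤ) + cnt n ((k:ℤ)+2) := by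
        have h2 := cnt_succ n ((k:ℤ)+1) (by omega)
        have e : (k:ℤ)+1-1 = (k:ℤ) := by ring
        have e2 : (k:ℤ)+1+1 = (k:ℤ)+2 := by ring
        rw [e, e2] at h2
        exact h2
      rw [show (((k+1:ℕ)):ℤ) = (k:ℤ)+1 by push_cast; ring, h1]
      push_cast
      rw [show (k:ℤ)+2 = ((k+2:ℕ):ℤ) by push_cast; ring]
      rw [show ((k:ℤ)) = ((k:ℕ):ℤ) from rfl]
      rw [ih k, ih (k+2)]
      rw [B, B, B]
      by_cases h : (n + k) % 2 = 0
      · rw [if_pos h, if_pos (by omega), if_pos (by omega)]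
        obtain ⟨j, hj⟩ : ∃ j, (n + k)/2 = j := ⟨_, rfl⟩
        have e1 : (n + (k+2))/2 = j + 1 := by omega
        have e2 : (n+1+(k+1))/2 = j + 1 := by omega
        rw [hj, e1, e2]
        have p1 : (n+1).choose (j+1) = n.choose j + n.choose (j+1) :=
          Nat.choose_succ_succ n j
        have p2 : (n+1).choose (j+1+1) = n.choose (j+1) + n.choose (j+2) :=
          Nat.choose_succ_succ n (j+1)
        push_cast [p1, p2]
        ring
      · rw [if_neg (by omega), if_neg (by omega), if_neg (by omega)]
        norm_num



lemma sum_le_length (l : List ℤ) (h : ∀ x ∈ l, x = 1 ∨ x = -1) : l.sum ≤ l.length := by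
  induction l with
  | nil => simp
  | cons x t ih =>
    have hx := h x (by simp)
    have := ih (fun z hz => h z (by simp [hz]))
    simp only [List.sum_cons, List.length_cons]
    push_cast
    omega

lemma even_diff (l : List ℤ) (h : ∀ x ∈ l, x = 1 ∨ x = -1) :
    ∃ u : ℤ, (l.length : ℤ) - l.sum = 2 * u := by
  induction l with
  | nil => exact ⟨0, by simp⟩
  | cons x t ih =>
    obtain ⟨u, hu⟩ := ih (fun z hz => h z (by simp [hz]))
    have hx := h x (by simp)
    rcases hx with hx | hx
    · exact ⟨u, by simp only [List.sum_cons, List.length_cons, hx]; push_cast; omega⟩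
    · exact ⟨u + 1, by simp only [List.sum_cons, List.length_cons, hx]; push_cast; omega⟩

lemma card_S (n : ℕ) : (S n).card = n.choose (n / 2) := by
  classical
  have hmemf : ∀ l ∈ S n, ((n:ℤ) - l.sum).toNat / 2 ∈ Finset.range (n/2 + 1) := by
    intro l hl
    obtain ⟨hlen, hmem, hpre⟩ := (mem_S n l).mp hl
    have h0 : 0 ≤ l.sum := by
      have := hpre l.length
      rwa [List.take_length] at this
    have h1 : l.sum ≤ n := by
      have := sum_le_length l hmem
      omega
    rw [Finset.mem_range]
    omega
  have key := Finset.card_eq_sum_card_fiberwise hmemf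
  have hfib : ∀ i ∈ Finset.range (n/2 + 1),
      ((S n).filter fun l => ((n:ℤ) - l.sum).toNat / 2 = i).card = cnt n ((n:ℤ) - 2*i) := by
    intro i hi
    rw [Finset.mem_range] at hi
    rw [cnt]
    congr 1
    apply Finset.filter_congr
    intro l hl
    obtain ⟨hlen, hmem, hpre⟩ := (mem_S n l).mp hl
    have h0 : 0 ≤ l.sum := by
      have := hpre l.length
      rwa [List.take_length] at this
    have h1 : l.sum ≤ n := by
      have := sum_le_length l hmem
      omega
    obtain ⟨u, hu⟩ := even_diff l hmem
    rw [hlen] at hu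
    constructor
    · intro he; omega
    · intro he; omega
  rw [Finset.sum_congr rfl hfib] at key
  set f : ℕ → ℤ := fun i => (n.choose (n + 1 - i) : ℤ) with hf
  have hterm : ∀ i ∈ Finset.range (n/2 + 1),
      ((cnt n ((n:ℤ) - 2*i) : ℕ) : ℤ) = f (i+1) - f i := by
    intro i hi
    rw [Finset.mem_range] at hi
    have e0 : (n:ℤ) - 2*i = ((n - 2*i : ℕ) : ℤ) := by omega
    rw [e0, cnt_formula n (n - 2*i), B]
    rw [if_pos (by omega)]
    have e1 : (n + (n - 2*i))/2 = n - i := by omega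
    have e2 : n + 1 - (i+1) = n - i := by omega
    have e3 : n + 1 - i = (n - i) + 1 := by omega
    rw [e1, hf]
    simp only [e2, e3]
  have hsum : ((S n).card : ℤ) = f (n/2 + 1) - f 0 := by
    rw [key]
    push_cast [Finset.sum_congr rfl hterm]
    exact Finset.sum_range_sub f (n/2 + 1)
  have hf1 : f (n/2 + 1) = (n.choose (n - n/2) : ℤ) := by
    have e : n + 1 - (n/2 + 1) = n - n/2 := by omega
    simp only [hf, e]
  have hf0 : f 0 = 0 := by
    rw [hf]
    simp [Nat.choose_eq_zero_of_lt (by omega : n < n + 1 - 0)]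
  have : ((S n).card : ℤ) = (n.choose (n - n/2) : ℤ) := by rw [hsum, hf1, hf0]; ring
  have hcard : (S n).card = n.choose (n - n/2) := by exact_mod_cast this
  rw [hcard, Nat.choose_symm (Nat.div_le_self n 2)]

end GM

theorem grounded_motzkin_count (n : ℕ) :
    Nat.card {l : List ℤ // l.length = n ∧ (∀ x ∈ l, x = 1 ∨ x = -1 ∨ x = 0) ∧
      (∀ m, 0 ≤ (l.take m).sum) ∧ l.sum = 0 ∧
      (∀ (m : ℕ) (hm : m < l.length), l.get ⟨m, hm⟩ = 0 → (l.take m).sum = 0)} =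
    n.choose (n / 2) := by
  have e1 : Nat.card {l : List ℤ // GM.P n l} = Nat.card {l : List ℤ // GM.Q n l} :=
    Nat.card_congr (GM.PQequiv n)
  have e2 : Nat.card {l : List ℤ // GM.Q n l} = Nat.card {l : List ℤ // l ∈ GM.S n} :=
    Nat.card_congr (Equiv.subtypeEquivRight (fun l => (GM.mem_S n l).symm))
  have e3 : Nat.card {l : List ℤ // l ∈ GM.S n} = (GM.S n).card := by
    rw [Nat.card_eq_fintype_card, Fintype.card_coe]
  calc Nat.card _ = Nat.card {l : List ℤ // GM.P n l} := rfl
    _ = n.choose (n / 2) := by rw [e1, e2, e3, GM.card_S]
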